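/- Fix an integer k ≥ 3, a real D > 1, and a real δ with 1 − (k/2 − 1)/(Dk − 1) < δ < 1. Then there exists N such that for every integer n ≥ N, every integer m with n^{1+(Dk−1)(1−δ)} < m ≤ n^{k/2}, and t = ⌈n^δ⌉, one has 2kt < n, t·log₂(m/t) > D·k·t·log₂(2n/(kt)), and consequently (2/D)·t·log₂(m/t) > H(2kt/n)·n. -/

import Mathlib

/-- The binary entropy function `H(x) = −x·log₂(x) − (1−x)·log₂(1−x)`. -/
noncomputable def binaryEntropy (x : ℝ) : ℝ :=
  -x * Real.logb 2 x - (1 - x) * Real.logb 2 (1 - x)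

lemma entropy_lt_aux (x : ℝ) (hx0 : 0 < x) (hx1 : x < 1) :
    binaryEntropy x < x * Real.logb 2 (4 / x) := by
  have h2 : (0 : ℝ) < Real.log 2 := Real.log_pos one_lt_two
  have h2' : (0.6931471803 : ℝ) < Real.log 2 := Real.log_two_gt_d9
  have h1x : (0 : ℝ) < 1 - x := by linarith
  -- key : -(1-x) * log (1-x) < x
  have hkey : -(1 - x) * Real.log (1 - x) < x := by
    have hinv : Real.log (1 - x)⁻¹ < (1 - x)⁻¹ - 1 :=
      Real.log_lt_sub_one_of_pos (by positivity) (by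
        intro h
        rw [inv_eq_one] at h
        linarith)
    rw [Real.log_inv] at hinv
    have h3 : (1 - x)⁻¹ - 1 = x / (1 - x) := by field_simp; ring
    rw [h3] at hinv
    have := mul_lt_mul_of_pos_left hinv h1x
    rw [mul_div_cancel₀ _ h1x.ne'] at this
    nlinarith
  have hlog4 : Real.log 4 = 2 * Real.log 2 := by
    rw [show (4 : ℝ) = 2 ^ (2 : ℕ) by norm_num, Real.log_pow]
    push_cast; ring
  unfold binaryEntropy
  rw [Real.logb, Real.logb, Real.logb, Real.log_div (by norm_num) hx0.ne', hlog4]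
  have e1 : -x * (Real.log x / Real.log 2) - (1 - x) * (Real.log (1 - x) / Real.log 2)
      = (-x * Real.log x - (1 - x) * Real.log (1 - x)) / Real.log 2 := by ring
  have e2 : x * ((2 * Real.log 2 - Real.log x) / Real.log 2)
      = (x * (2 * Real.log 2 - Real.log x)) / Real.log 2 := by ring
  rw [e1, e2, div_lt_div_iff_of_pos_right h2]
  nlinarith

set_option maxHeartbeats 1000000 in
theorem compression_entropy_bound (k : ℕ) (hk : 3 ≤ k) (D : ℝ) (hD : 1 < D) (δ : ℝ)
    (hδl : 1 - ((k : ℝ) / 2 - 1) / (D * k - 1) < δ) (hδu : δ < 1) :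
    ∃ N : ℕ, ∀ n : ℕ, N ≤ n → ∀ m : ℕ,
      (n : ℝ) ^ ((1 : ℝ) + (D * k - 1) * (1 - δ)) < (m : ℝ) →
      (m : ℝ) ≤ (n : ℝ) ^ ((k : ℝ) / 2) →
      ∀ t : ℕ, t = ⌈(n : ℝ) ^ δ⌉₊ →
        (2 * k * t < n)
        ∧ ((t : ℝ) * Real.logb 2 ((m : ℝ) / t)
            > D * ((k : ℝ) * t) * Real.logb 2 (2 * n / ((k : ℝ) * t)))
        ∧ ((2 / D) * ((t : ℝ) * Real.logb 2 ((m : ℝ) / t))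
            > binaryEntropy (2 * (k : ℝ) * t / n) * n) := by
  have hk3 : (3 : ℝ) ≤ (k : ℝ) := by exact_mod_cast hk
  have hkpos : (0 : ℝ) < (k : ℝ) := by linarith
  have hDk : (3 : ℝ) < D * k := by nlinarith
  have hδ0 : 0 < δ := by
    have hden : (0 : ℝ) < D * k - 1 := by linarith
    have hnum : (k : ℝ) / 2 - 1 ≤ D * k - 1 := by nlinarith
    have : ((k : ℝ) / 2 - 1) / (D * k - 1) ≤ 1 := by
      rw [div_le_one hden]; exact hnum
    linarith
  have h1δ : 0 < 1 - δ := by linarith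
  -- numeric : 3/2 < logb 2 3
  have hlog3 : (3 : ℝ) / 2 < Real.logb 2 3 := by
    rw [Real.lt_logb_iff_rpow_lt one_lt_two (by norm_num)]
    set y : ℝ := (2 : ℝ) ^ ((3 : ℝ) / 2) with hy
    have hy0 : 0 < y := Real.rpow_pos_of_pos (by norm_num) _
    have hy2 : y ^ (2 : ℕ) = 8 := by
      rw [hy, ← Real.rpow_natCast ((2:ℝ) ^ ((3:ℝ)/2)) 2, ← Real.rpow_mul (by norm_num)]
      norm_num
    nlinarith
  have hlogk : (3 : ℝ) / 2 < Real.logb 2 (k : ℝ) :=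
    lt_of_lt_of_le hlog3 (Real.logb_le_logb_of_le one_lt_two (by norm_num) hk3)
  -- choose N
  have htend : Filter.Tendsto (fun n : ℕ => ((n : ℝ)) ^ (1 - δ)) Filter.atTop Filter.atTop :=
    (tendsto_rpow_atTop h1δ).comp tendsto_natCast_atTop_atTop
  have hev : ∀ᶠ n : ℕ in Filter.atTop,
      (4 * (k : ℝ) < (n : ℝ) ^ (1 - δ)) ∧ 2 ≤ n :=
    (htend.eventually_gt_atTop _).and (Filter.eventually_ge_atTop 2)
  obtain ⟨N, hN⟩ := Filter.eventually_atTop.mp hev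
  refine ⟨N, fun n hn m hm1 hm2 t ht => ?_⟩
  obtain ⟨hpow, hn2⟩ := hN n hn
  have hn0 : (0 : ℝ) < n := by exact_mod_cast Nat.lt_of_lt_of_le (by norm_num) hn2
  have hn1 : (1 : ℝ) ≤ n := by exact_mod_cast Nat.one_le_of_lt hn2
  have hndpos : (0 : ℝ) < (n : ℝ) ^ δ := Real.rpow_pos_of_pos hn0 δ
  have hnd1 : (1 : ℝ) ≤ (n : ℝ) ^ δ := by
    calc (1 : ℝ) = (n : ℝ) ^ (0 : ℝ) := (Real.rpow_zero _).symm
    _ ≤ (n : ℝ) ^ δ := Real.rpow_le_rpow_of_exponent_le hn1 hδ0.le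
  have ht1 : (n : ℝ) ^ δ ≤ (t : ℝ) := ht ▸ Nat.le_ceil _
  have ht2 : (t : ℝ) < (n : ℝ) ^ δ + 1 := ht ▸ Nat.ceil_lt_add_one hndpos.le
  have ht2' : (t : ℝ) ≤ 2 * (n : ℝ) ^ δ := by linarith
  have htpos : (0 : ℝ) < (t : ℝ) := by linarith
  -- claim 1
  have hsplit : (n : ℝ) ^ (1 - δ) * (n : ℝ) ^ δ = (n : ℝ) := by
    rw [← Real.rpow_add hn0]; norm_num
  have h4k : 4 * (k : ℝ) * (n : ℝ) ^ δ < n := by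
    calc 4 * (k : ℝ) * (n : ℝ) ^ δ < (n : ℝ) ^ (1 - δ) * (n : ℝ) ^ δ :=
          mul_lt_mul_of_pos_right hpow hndpos
    _ = n := hsplit
  have h2kt : 2 * (k : ℝ) * (t : ℝ) < n := by nlinarith
  have hclaim1 : 2 * k * t < n := by exact_mod_cast (by push_cast; nlinarith : ((2 * k * t : ℕ) : ℝ) < (n : ℝ))
  set L : ℝ := Real.logb 2 n with hL
  -- claim 2
  have hma : (0 : ℝ) < (n : ℝ) ^ ((1 : ℝ) + (D * k - 1) * (1 - δ)) :=
    Real.rpow_pos_of_pos hn0 _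
  have hm0 : (0 : ℝ) < m := lt_trans hma hm1
  have hfrac : (n : ℝ) ^ ((1 : ℝ) + (D * k - 1) * (1 - δ)) / (2 * (n : ℝ) ^ δ)
      < (m : ℝ) / t := by
    rw [div_lt_div_iff₀ (by positivity) htpos]
    nlinarith [mul_lt_mul_of_pos_right hm1 htpos,
      mul_le_mul_of_nonneg_left ht2' hm0.le]
  have heq : (n : ℝ) ^ ((1 : ℝ) + (D * k - 1) * (1 - δ)) / (2 * (n : ℝ) ^ δ)
      = (n : ℝ) ^ (D * k * (1 - δ)) / 2 := by
    rw [show D * k * (1 - δ) = ((1 : ℝ) + (D * k - 1) * (1 - δ)) - δ by ring,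
      Real.rpow_sub hn0]
    ring
  have hL1 : D * k * (1 - δ) * L - 1 < Real.logb 2 ((m : ℝ) / t) := by
    have h := Real.logb_lt_logb (b := 2) one_lt_two (by positivity) (heq ▸ hfrac)
    rwa [Real.logb_div (by positivity) (by norm_num),
      Real.logb_rpow_eq_mul_logb_of_pos hn0,
      Real.logb_self_eq_one one_lt_two] at h
  have hfrac2 : 2 * (n : ℝ) / ((k : ℝ) * t) ≤ (2 / k) * (n : ℝ) ^ (1 - δ) := by
    have e : (2 / (k : ℝ)) * (n : ℝ) ^ (1 - δ) = 2 * (n : ℝ) / ((k : ℝ) * (n : ℝ) ^ δ) := by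
      rw [Real.rpow_sub hn0, Real.rpow_one, div_mul_div_comm]
    rw [e]
    gcongr
  have hL2 : Real.logb 2 (2 * n / ((k : ℝ) * t)) ≤ (1 - δ) * L + 1 - Real.logb 2 k := by
    have hp : (0 : ℝ) < 2 * n / ((k : ℝ) * t) := by positivity
    have h := Real.logb_le_logb_of_le one_lt_two hp hfrac2
    rw [Real.logb_mul (by positivity) (by positivity),
      Real.logb_div (by norm_num) hkpos.ne',
      Real.logb_self_eq_one one_lt_two,
      Real.logb_rpow_eq_mul_logb_of_pos hn0] at h
    rw [hL]
    linarith
  have hclaim2 : (t : ℝ) * Real.logb 2 ((m : ℝ) / t)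
      > D * ((k : ℝ) * t) * Real.logb 2 (2 * n / ((k : ℝ) * t)) := by
    have hDkt : (0 : ℝ) < D * ((k : ℝ) * t) := by positivity
    have hkey : (0 : ℝ) ≤ (t : ℝ) * (D * k * Real.logb 2 (k : ℝ) - D * k - 1) := by
      apply mul_nonneg htpos.le
      nlinarith
    calc D * ((k : ℝ) * t) * Real.logb 2 (2 * n / ((k : ℝ) * t))
        ≤ D * ((k : ℝ) * t) * ((1 - δ) * L + 1 - Real.logb 2 k) :=
          mul_le_mul_of_nonneg_left hL2 hDkt.le
      _ ≤ (t : ℝ) * (D * k * (1 - δ) * L - 1) := by nlinarith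
      _ < (t : ℝ) * Real.logb 2 ((m : ℝ) / t) := mul_lt_mul_of_pos_left hL1 htpos
  refine ⟨hclaim1, hclaim2, ?_⟩
  -- claim 3
  set x : ℝ := 2 * (k : ℝ) * t / n with hx
  have hx0 : 0 < x := by positivity
  have hx1 : x < 1 := by rw [hx, div_lt_one hn0]; exact h2kt
  have h4x : (4 : ℝ) / x = 2 * n / ((k : ℝ) * t) := by
    rw [hx, div_div_eq_mul_div, show (4:ℝ) * n = 2 * (2 * n) by ring,
      show 2 * (k:ℝ) * t = 2 * ((k:ℝ) * t) by ring,
      mul_div_mul_left _ _ (two_ne_zero)]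
  have hent := entropy_lt_aux x hx0 hx1
  have hxn : x * n = 2 * (k : ℝ) * t := by
    rw [hx, div_mul_cancel₀ _ hn0.ne']
  have hH : binaryEntropy x * n < 2 * (k : ℝ) * t * Real.logb 2 (2 * n / ((k : ℝ) * t)) := by
    calc binaryEntropy x * n < x * Real.logb 2 (4 / x) * n :=
          mul_lt_mul_of_pos_right hent hn0
    _ = x * n * Real.logb 2 (4 / x) := by ring
    _ = 2 * (k : ℝ) * t * Real.logb 2 (2 * n / ((k : ℝ) * t)) := by rw [hxn, h4x]
  have hD0 : (0 : ℝ) < D := by linarith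
  calc binaryEntropy x * n < 2 * (k : ℝ) * t * Real.logb 2 (2 * n / ((k : ℝ) * t)) := hH
    _ = (2 / D) * (D * ((k : ℝ) * t) * Real.logb 2 (2 * n / ((k : ℝ) * t))) := by
        field_simp
    _ < (2 / D) * ((t : ℝ) * Real.logb 2 ((m : ℝ) / t)) :=
        mul_lt_mul_of_pos_left hclaim2 (by positivity)
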